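/- Let p > 1, let Z ≥ 0 and z_1, …, z_n ≥ 0 be real numbers. Then (Z + ∑_{j=1}^n z_j)^p − ∑_{j=1}^n z_j^p ≥ c(p,n) (Z + ∑_{j=1}^n z_j)^{p−1} · (Z + min_i ∑_{j≠i} z_j) for some constant c(p,n) > 0 depending only on p and n. -/

import Mathlib

open Finset

/-- Core scalar inequality: for `q > 0` and `t ∈ [0,1]`, `min q 1 * (1 - t) ≤ 1 - t ^ q`. -/
lemma core_ineq (q t : ℝ) (hq : 0 < q) (ht0 : 0 ≤ t) (ht1 : t ≤ 1) :
    min q 1 * (1 - t) ≤ 1 - t ^ q := by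
  rcases le_total q 1 with hq1 | hq1
  · rw [min_eq_left hq1]
    have hb : (1 + (t - 1)) ^ q ≤ 1 + q * (t - 1) :=
      rpow_one_add_le_one_add_mul_self (by linarith) hq.le hq1
    rw [show 1 + (t - 1) = t by ring] at hb
    linarith
  · rw [min_eq_right hq1]
    rcases eq_or_lt_of_le ht0 with rfl | ht0'
    · rw [Real.zero_rpow hq.ne']; linarith
    · have : t ^ q ≤ t ^ (1:ℝ) := Real.rpow_le_rpow_of_exponent_ge ht0' ht1 hq1
      rw [Real.rpow_one] at this
      linarith

theorem stmt2 (p : ℝ) (hp : 1 < p) (n : ℕ) (hn : 1 ≤ n) :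
    ∃ c : ℝ, 0 < c ∧ ∀ (Z : ℝ) (z : Fin n → ℝ), 0 ≤ Z → (∀ j, 0 ≤ z j) →
      c * (Z + ∑ j, z j) ^ (p - 1) * (Z + ⨅ i : Fin n, ∑ j ∈ Finset.univ.erase i, z j)
        ≤ (Z + ∑ j, z j) ^ p - ∑ j, (z j) ^ p := by
  set q : ℝ := p - 1 with hqdef
  have hq : 0 < q := by simp [hqdef]; linarith
  refine ⟨min q 1, lt_min hq one_pos, ?_⟩
  intro Z z hZ hz
  have hne : Nonempty (Fin n) := Fin.pos_iff_nonempty.mp hn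
  -- max element
  obtain ⟨i₀, -, hi₀⟩ := Finset.exists_max_image (univ : Finset (Fin n)) z
    ⟨Classical.arbitrary (Fin n), mem_univ _⟩
  set M : ℝ := z i₀ with hMdef
  have hM0 : 0 ≤ M := hz i₀
  set S : ℝ := Z + ∑ j, z j with hSdef
  have hsum0 : 0 ≤ ∑ j, z j := Finset.sum_nonneg fun j _ => hz j
  have hS0 : 0 ≤ S := by positivity
  have hMS : M ≤ S := by
    have : M ≤ ∑ j, z j := Finset.single_le_sum (fun j _ => hz j) (mem_univ i₀)
    linarith
  -- bound the infimum
  have hinf : Z + ⨅ i : Fin n, ∑ j ∈ Finset.univ.erase i, z j ≤ S - M := by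
    have hbdd : BddBelow (Set.range fun i : Fin n => ∑ j ∈ Finset.univ.erase i, z j) :=
      (Set.finite_range _).bddBelow
    have h1 : (⨅ i : Fin n, ∑ j ∈ Finset.univ.erase i, z j) ≤ ∑ j ∈ Finset.univ.erase i₀, z j :=
      ciInf_le hbdd i₀
    have h2 : ∑ j ∈ Finset.univ.erase i₀, z j = (∑ j, z j) - M := by
      rw [hMdef, eq_sub_iff_add_eq, Finset.sum_erase_add _ _ (mem_univ i₀)]
    rw [h2] at h1
    rw [hSdef]; linarith
  have hcSq : 0 ≤ min q 1 * S ^ q := by positivity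
  have step1 : min q 1 * S ^ q * (Z + ⨅ i : Fin n, ∑ j ∈ Finset.univ.erase i, z j)
      ≤ min q 1 * S ^ q * (S - M) := mul_le_mul_of_nonneg_left hinf hcSq
  -- bound the sum of p-th powers
  have hsum_pow : ∑ j, (z j) ^ p ≤ M ^ q * S := by
    have h1 : ∑ j, (z j) ^ p ≤ ∑ j, M ^ q * z j := by
      apply Finset.sum_le_sum
      intro j _
      have : (z j) ^ p = (z j) ^ q * z j := by
        rw [show p = q + 1 from by rw [hqdef]; ring,
          Real.rpow_add' (hz j) (by intro h; rw [hqdef] at h; linarith), Real.rpow_one]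
      rw [this]
      apply mul_le_mul_of_nonneg_right _ (hz j)
      exact Real.rpow_le_rpow (hz j) (hi₀ j (mem_univ j)) hq.le
    rw [← Finset.mul_sum] at h1
    refine h1.trans ?_
    apply mul_le_mul_of_nonneg_left _ (Real.rpow_nonneg hM0 q)
    rw [hSdef]; linarith
  -- main estimate
  have key : min q 1 * S ^ q * (S - M) ≤ S ^ p - M ^ q * S := by
    rcases eq_or_lt_of_le hS0 with hSz | hSpos
    · have hM : M = 0 := le_antisymm (hMS.trans_eq hSz.symm) hM0
      rw [← hSz, hM, Real.zero_rpow hq.ne', Real.zero_rpow (by linarith : p ≠ 0)]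
      norm_num
    · set t : ℝ := M / S with htdef
      have ht0 : 0 ≤ t := div_nonneg hM0 hS0
      have ht1 : t ≤ 1 := (div_le_one hSpos).mpr hMS
      have hMt : M = t * S := by rw [htdef, div_mul_cancel₀ M hSpos.ne']
      have hSp : S ^ p = S ^ q * S := by
        rw [show p = q + 1 from by rw [hqdef]; ring,
          Real.rpow_add' hS0 (by intro h; rw [hqdef] at h; linarith), Real.rpow_one]
      have hMq : M ^ q = t ^ q * S ^ q := by
        rw [hMt, Real.mul_rpow ht0 hS0]
      have hcore := core_ineq q t hq ht0 ht1
      have hSq0 : 0 ≤ S ^ q := Real.rpow_nonneg hS0 q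
      rw [hSp, hMq, hMt]
      nlinarith [mul_le_mul_of_nonneg_right hcore (mul_nonneg hSq0 hS0)]
  have hfinal : S ^ p - M ^ q * S ≤ S ^ p - ∑ j, (z j) ^ p := by linarith
  calc min q 1 * S ^ q * (Z + ⨅ i : Fin n, ∑ j ∈ Finset.univ.erase i, z j)
      ≤ S ^ p - M ^ q * S := step1.trans key
    _ ≤ S ^ p - ∑ j, (z j) ^ p := hfinal
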